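/- Let P be a convex polygon, ω ∈ (0, π), and v a vertex of P with interior angle α(v) < ω. The set of directions (bisector directions) of minimal ω-wedges of P whose apex is at v is a closed arc of directions of angular width exactly ω − α(v). -/

import Mathlib

open EuclideanGeometry Real Set
open scoped Classical

noncomputable section

abbrev Plane := EuclideanSpace ℝ (Fin 2)

/-- The unit vector in direction `θ`. -/
def unitVec (θ : ℝ) : Plane := (WithLp.equiv 2 (Fin 2 → ℝ)).symm ![Real.cos θ, Real.sin θ]

/-- The closed ray from `x` in direction `d`. -/
def ray (x d : Plane) : Set Plane := {y | ∃ t : ℝ, 0 ≤ t ∧ y = x + t • d}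

/-- The closed wedge with apex `x` bounded by the rays in directions `d₁` and `d₂`. -/
def wedgeSet (x d₁ d₂ : Plane) : Set Plane :=
  {y | ∃ s t : ℝ, 0 ≤ s ∧ 0 ≤ t ∧ y = x + s • d₁ + t • d₂}

/-- The wedge with apex `x`, arm directions `d₁`, `d₂` (unit vectors at angle `ω`),
is a minimal `ω`-wedge for `P`: it contains `P` and both arms touch `P`. -/
def IsMinWedge (P : Set Plane) (ω : ℝ) (x d₁ d₂ : Plane) : Prop :=
  ‖d₁‖ = 1 ∧ ‖d₂‖ = 1 ∧ InnerProductGeometry.angle d₁ d₂ = ω ∧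
  P ⊆ wedgeSet x d₁ d₂ ∧ (P ∩ ray x d₁).Nonempty ∧ (P ∩ ray x d₂).Nonempty

/-- The `ω`-cloud of `P`: the locus of apices of all minimal `ω`-wedges. -/
def omegaCloud (P : Set Plane) (ω : ℝ) : Set Plane := {x | ∃ d₁ d₂, IsMinWedge P ω x d₁ d₂}

/-- `V` is the vertex set of a convex polygon: at least 3 points, in strictly convex position. -/
def IsConvexPolygon (V : Finset Plane) : Prop :=
  3 ≤ V.card ∧ ∀ v ∈ V, v ∉ convexHull ℝ ((V.erase v : Finset Plane) : Set Plane)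

/-- The interior angle of a convex body `P` at a boundary point `v`, defined as the
supremum of angles `∠ a v b` over `a, b ∈ P \ {v}`. -/
def interiorAngle (P : Set Plane) (v : Plane) : ℝ :=
  sSup {θ : ℝ | ∃ a ∈ P, ∃ b ∈ P, a ≠ v ∧ b ≠ v ∧ θ = EuclideanGeometry.angle a v b}

/-- A circular arc, given by center, radius, starting angle and angular extent. -/
structure CircArc where
  center : Plane
  radius : ℝ
  start : ℝ
  delta : ℝ

/-- The (closed) point set of a circular arc. -/
def CircArc.points (A : CircArc) : Set Plane :=
  {p | ∃ θ ∈ Set.Icc A.start (A.start + A.delta), p = A.center + A.radius • unitVec θ}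

/-- The relative interior of a circular arc. -/
def CircArc.intPoints (A : CircArc) : Set Plane :=
  {p | ∃ θ ∈ Set.Ioo A.start (A.start + A.delta), p = A.center + A.radius • unitVec θ}

/-- The start point of an arc when it is traversed clockwise. -/
def CircArc.cwStart (A : CircArc) : Plane := A.center + A.radius • unitVec (A.start + A.delta)

/-- The end point of an arc when it is traversed clockwise. -/
def CircArc.cwEnd (A : CircArc) : Plane := A.center + A.radius • unitVec A.start

/-- The set of (bisector) directions of minimal `ω`-wedges of `P` with apex `x`. -/
def wedgeDirs (P : Set Plane) (ω : ℝ) (x : Plane) : Set Plane :=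
  {d | ∃ d₁ d₂, IsMinWedge P ω x d₁ d₂ ∧ d = (‖d₁ + d₂‖)⁻¹ • (d₁ + d₂)}

/-- On every interior point of the arc `A`, the minimal `ω`-wedge of `P` touches `P`
at `p` (with one arm) and `q` (with the other arm). -/
def ContactPair (P : Set Plane) (ω : ℝ) (A : CircArc) (p q : Plane) : Prop :=
  ∀ x ∈ A.intPoints, ∃ d₁ d₂, IsMinWedge P ω x d₁ d₂ ∧ p ∈ ray x d₁ ∧ q ∈ ray x d₂

lemma unitVec_apply0 (θ : ℝ) : unitVec θ 0 = Real.cos θ := rfl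

lemma unitVec_apply1 (θ : ℝ) : unitVec θ 1 = Real.sin θ := rfl

lemma inner_unitVec (s t : ℝ) : (inner ℝ (unitVec s) (unitVec t) : ℝ) = Real.cos (s - t) := by
  simp only [PiLp.inner_apply, Fin.sum_univ_two, unitVec_apply0, unitVec_apply1,
    RCLike.inner_apply', conj_trivial, Real.cos_sub]

lemma norm_unitVec (t : ℝ) : ‖unitVec t‖ = 1 := by
  have : (inner ℝ (unitVec t) (unitVec t) : ℝ) = 1 := by
    simpa using inner_unitVec t t
  have h := real_inner_self_eq_norm_sq (unitVec t)
  nlinarith [norm_nonneg (unitVec t)]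

lemma unitVec_ext {p : Plane} {θ : ℝ} (h0 : p 0 = Real.cos θ) (h1 : p 1 = Real.sin θ) :
    p = unitVec θ := by
  apply PiLp.ext; intro i
  fin_cases i
  · exact h0
  · exact h1

lemma unitVec_add_int_mul (θ : ℝ) (k : ℤ) : unitVec (θ + k * (2 * π)) = unitVec θ := by
  apply unitVec_ext
  · rw [unitVec_apply0, Real.cos_add_int_mul_two_pi]
  · rw [unitVec_apply1, Real.sin_add_int_mul_two_pi]

lemma exists_arg {d : Plane} (hd : ‖d‖ = 1) : ∃ t : ℝ, d = unitVec t := by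
  have hsq : (d 0) ^ 2 + (d 1) ^ 2 = 1 := by
    have h2 : Real.sqrt (∑ i : Fin 2, ‖d i‖ ^ 2) = 1 := by
      rw [← EuclideanSpace.norm_eq d, hd]
    have hnn : 0 ≤ ∑ i : Fin 2, ‖d i‖ ^ 2 := by positivity
    have h3 : (∑ i : Fin 2, ‖d i‖ ^ 2) = 1 := by
      nlinarith [Real.sq_sqrt hnn]
    simpa [Fin.sum_univ_two, sq_abs, Real.norm_eq_abs] using h3
  have hm1 : -1 ≤ d 0 := by nlinarith [sq_nonneg (d 1)]
  have h1' : d 0 ≤ 1 := by nlinarith [sq_nonneg (d 1)]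
  have hs : Real.sin (Real.arccos (d 0)) = Real.sqrt (1 - (d 0) ^ 2) := Real.sin_arccos (d 0)
  have habs : Real.sqrt (1 - (d 0) ^ 2) = |d 1| := by
    rw [show 1 - (d 0) ^ 2 = (d 1) ^ 2 by linarith]
    exact Real.sqrt_sq_eq_abs _
  rcases le_or_gt 0 (d 1) with h | h
  · refine ⟨Real.arccos (d 0), unitVec_ext ?_ ?_⟩
    · exact (Real.cos_arccos hm1 h1').symm
    · rw [hs, habs, abs_of_nonneg h]
  · refine ⟨-Real.arccos (d 0), unitVec_ext ?_ ?_⟩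
    · rw [Real.cos_neg, Real.cos_arccos hm1 h1']
    · rw [Real.sin_neg, hs, habs, abs_of_neg h]
      ring

lemma angle_unitVec {s t : ℝ} (h : |s - t| ≤ π) :
    InnerProductGeometry.angle (unitVec s) (unitVec t) = |s - t| := by
  unfold InnerProductGeometry.angle
  rw [inner_unitVec, norm_unitVec, norm_unitVec]
  rw [show Real.cos (s - t) = Real.cos |s - t| from (Real.cos_abs (s-t)).symm]
  simpa using Real.arccos_cos (abs_nonneg _) h

lemma plane_ext {p q : Plane} (h0 : p 0 = q 0) (h1 : p 1 = q 1) : p = q := by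
  apply PiLp.ext; intro i; fin_cases i; exacts [h0, h1]

lemma smul_unitVec_apply (c θ : ℝ) (i : Fin 2) : (c • unitVec θ) i = c * unitVec θ i := rfl

lemma sin_smul_identity (s x ω : ℝ) :
    Real.sin (ω - x) • unitVec s + Real.sin x • unitVec (s + ω)
      = Real.sin ω • unitVec (s + x) := by
  apply plane_ext <;>
  · simp only [PiLp.add_apply, PiLp.smul_apply, smul_eq_mul, unitVec_apply0, unitVec_apply1,
      Real.sin_add, Real.cos_add, Real.sin_sub, Real.cos_sub]
    ring

lemma unitVec_add_unitVec (s ω : ℝ) :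
    unitVec s + unitVec (s + ω) = (2 * Real.cos (ω / 2)) • unitVec (s + ω / 2) := by
  apply plane_ext
  · simp only [PiLp.add_apply, PiLp.smul_apply, smul_eq_mul, unitVec_apply0]
    rw [Real.cos_add_cos]
    rw [show (s + (s + ω)) / 2 = s + ω / 2 by ring, show (s - (s + ω)) / 2 = -(ω / 2) by ring,
      Real.cos_neg]
    ring
  · simp only [PiLp.add_apply, PiLp.smul_apply, smul_eq_mul, unitVec_apply1]
    rw [show s + ω = (s + ω / 2) + ω / 2 by ring, show s = (s + ω / 2) - ω / 2 by ring]
    rw [Real.sin_add, Real.sin_sub]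
    ring

lemma exists_mod_two_pi (x : ℝ) : ∃ k : ℤ, 0 ≤ x + k * (2 * π) ∧ x + k * (2 * π) < 2 * π := by
  have h2π : (0:ℝ) < 2 * π := by positivity
  refine ⟨-⌊x / (2 * π)⌋, ?_, ?_⟩
  · have := Int.floor_le (x / (2 * π))
    have h := mul_le_mul_of_nonneg_right this (le_of_lt h2π)
    rw [div_mul_cancel₀ _ (ne_of_gt h2π)] at h
    push_cast
    linarith
  · have := Int.lt_floor_add_one (x / (2 * π))
    have h := mul_lt_mul_of_pos_right this h2π
    rw [div_mul_cancel₀ _ (ne_of_gt h2π)] at h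
    push_cast
    push_cast at h
    linarith

lemma sin_nonneg_le_pi {x : ℝ} (h0 : 0 ≤ x) (h2 : x < 2 * π) (hs : 0 ≤ Real.sin x) :
    x ≤ π := by
  by_contra h
  push_neg at h
  have : 0 < Real.sin (x - π) := Real.sin_pos_of_pos_of_lt_pi (by linarith) (by linarith)
  rw [Real.sin_sub_pi] at this
  linarith

lemma sin_nonneg_of_Ioo {y : ℝ} (h0 : -π < y) (h1 : y < π) (hs : 0 ≤ Real.sin y) : 0 ≤ y := by
  by_contra h
  push_neg at h
  have : 0 < Real.sin (-y) := Real.sin_pos_of_pos_of_lt_pi (by linarith) (by linarith)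
  rw [Real.sin_neg] at this
  linarith

lemma mem_wedge_of_arg {ω : ℝ} (hω0 : 0 < ω) (hωπ : ω < π) (v : Plane) (s : ℝ)
    {r x : ℝ} (hr : 0 ≤ r) (hx0 : 0 ≤ x) (hxω : x ≤ ω) :
    v + r • unitVec (s + x) ∈ wedgeSet v (unitVec s) (unitVec (s + ω)) := by
  have hsinω : 0 < Real.sin ω := Real.sin_pos_of_pos_of_lt_pi hω0 hωπ
  have hs1 : 0 ≤ Real.sin (ω - x) := Real.sin_nonneg_of_nonneg_of_le_pi (by linarith) (by linarith)
  have hs2 : 0 ≤ Real.sin x := Real.sin_nonneg_of_nonneg_of_le_pi hx0 (by linarith)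
  refine ⟨r * Real.sin (ω - x) / Real.sin ω, r * Real.sin x / Real.sin ω, by positivity,
    by positivity, ?_⟩
  have key := sin_smul_identity s x ω
  have : (r / Real.sin ω) • (Real.sin (ω - x) • unitVec s + Real.sin x • unitVec (s + ω))
      = (r / Real.sin ω) • (Real.sin ω • unitVec (s + x)) := by rw [key]
  rw [smul_add, smul_smul, smul_smul, smul_smul] at this
  rw [show r / Real.sin ω * Real.sin ω = r from div_mul_cancel₀ r (ne_of_gt hsinω)] at this
  rw [show r * Real.sin (ω - x) / Real.sin ω = r / Real.sin ω * Real.sin (ω - x) by ring,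
    show r * Real.sin x / Real.sin ω = r / Real.sin ω * Real.sin x by ring]
  rw [add_assoc, this]

lemma arg_constraints_of_mem_wedge {ω : ℝ} (hω0 : 0 < ω) (hωπ : ω < π) (v : Plane) (s ψ : ℝ)
    {r p q : ℝ} (hr : 0 < r) (hp : 0 ≤ p) (hq : 0 ≤ q)
    (heq : v + r • unitVec ψ = v + p • unitVec s + q • unitVec (s + ω)) :
    0 ≤ Real.sin (ψ - s) ∧ 0 ≤ Real.sin (ω - (ψ - s)) := by
  have hsinω : 0 < Real.sin ω := Real.sin_pos_of_pos_of_lt_pi hω0 hωπ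
  have hz : r • unitVec ψ = p • unitVec s + q • unitVec (s + ω) := by
    have := heq
    rw [add_assoc] at this
    exact add_left_cancel this
  constructor
  · have h1 : (inner ℝ (unitVec (s + π/2)) (r • unitVec ψ) : ℝ)
        = inner ℝ (unitVec (s + π/2)) (p • unitVec s + q • unitVec (s + ω)) := by rw [hz]
    rw [inner_add_right, real_inner_smul_right, real_inner_smul_right, real_inner_smul_right,
      inner_unitVec, inner_unitVec, inner_unitVec] at h1
    rw [show s + π/2 - s = π/2 by ring, Real.cos_pi_div_two,
      show s + π/2 - (s + ω) = -(ω - π/2) by ring, Real.cos_neg,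
      show ω - π/2 = -(π/2 - ω) by ring, Real.cos_neg, Real.cos_pi_div_two_sub,
      show s + π/2 - ψ = π/2 - (ψ - s) by ring, Real.cos_pi_div_two_sub] at h1
    have : 0 ≤ r * Real.sin (ψ - s) := by rw [h1]; positivity
    nlinarith
  · have h1 : (inner ℝ (unitVec (s + ω - π/2)) (r • unitVec ψ) : ℝ)
        = inner ℝ (unitVec (s + ω - π/2)) (p • unitVec s + q • unitVec (s + ω)) := by rw [hz]
    rw [inner_add_right, real_inner_smul_right, real_inner_smul_right, real_inner_smul_right,
      inner_unitVec, inner_unitVec, inner_unitVec] at h1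
    rw [show s + ω - π/2 - s = -(π/2 - ω) by ring, Real.cos_neg, Real.cos_pi_div_two_sub,
      show s + ω - π/2 - (s + ω) = -(π/2) by ring, Real.cos_neg, Real.cos_pi_div_two,
      show s + ω - π/2 - ψ = -(π/2 - (ω - (ψ - s))) by ring, Real.cos_neg,
      Real.cos_pi_div_two_sub] at h1
    have : 0 ≤ r * Real.sin (ω - (ψ - s)) := by rw [h1]; positivity
    nlinarith

lemma arg_window {ψ₀ β γ : ℝ} (hβγ0 : 0 < γ - β) (hβγ : γ - β < π)
    (h1 : 0 ≤ Real.sin (ψ₀ - β)) (h2 : 0 ≤ Real.sin (γ - ψ₀)) :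
    ∃ ψ, β ≤ ψ ∧ ψ ≤ γ ∧ ∃ k : ℤ, ψ = ψ₀ + k * (2 * π) := by
  obtain ⟨k, hk0, hk2⟩ := exists_mod_two_pi (ψ₀ - β)
  set x := ψ₀ - β + k * (2 * π) with hxdef
  have hsinx : 0 ≤ Real.sin x := by
    rw [hxdef, Real.sin_add_int_mul_two_pi]; exact h1
  have hxπ : x ≤ π := sin_nonneg_le_pi hk0 hk2 hsinx
  have hsin2 : 0 ≤ Real.sin (γ - β - x) := by
    have hper := Real.sin_add_int_mul_two_pi (γ - ψ₀) (-k)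
    rw [show γ - ψ₀ + (-k : ℤ) * (2 * π) = γ - β - x by rw [hxdef]; push_cast; ring] at hper
    rw [hper]
    exact h2
  have hx_le : x ≤ γ - β := by
    have h := sin_nonneg_of_Ioo (y := γ - β - x) (by linarith) (by linarith) hsin2
    linarith
  exact ⟨β + x, by linarith, by linarith, k, by rw [hxdef]; ring⟩

lemma exists_dir {a v : Plane} (h : a ≠ v) :
    ∃ r : ℝ, 0 < r ∧ ∃ d : Plane, ‖d‖ = 1 ∧ a = v + r • d := by
  have hne : a - v ≠ 0 := sub_ne_zero.mpr h
  have hr : 0 < ‖a - v‖ := norm_pos_iff.mpr hne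
  refine ⟨‖a - v‖, hr, ‖a - v‖⁻¹ • (a - v), ?_, ?_⟩
  · rw [norm_smul, norm_inv, norm_norm, inv_mul_cancel₀ (ne_of_gt hr)]
  · rw [smul_smul, mul_inv_cancel₀ (ne_of_gt hr), one_smul]
    abel

lemma exists_arg_near (φ : ℝ) {d : Plane} (hd : ‖d‖ = 1)
    (hpos : 0 < (inner ℝ (unitVec φ) d : ℝ)) :
    ∃ ψ, φ - π/2 < ψ ∧ ψ < φ + π/2 ∧ d = unitVec ψ := by
  obtain ⟨t, rfl⟩ := exists_arg hd
  rw [inner_unitVec] at hpos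
  set c := t - φ with hc
  set k := round (c / (2 * π)) with hk
  set c' := c - k * (2 * π) with hc'
  have h2π : (0:ℝ) < 2 * π := by positivity
  have habs : |c'| ≤ π := by
    have h1 : |c / (2 * π) - k| ≤ 1 / 2 := abs_sub_round (c / (2 * π))
    have h2 : |c / (2 * π) - k| * (2 * π) ≤ 1 / 2 * (2 * π) :=
      mul_le_mul_of_nonneg_right h1 (le_of_lt h2π)
    have h0 : c' = (c / (2 * π) - k) * (2 * π) := by rw [hc']; field_simp
    have h3 : |c'| = |c / (2 * π) - k| * (2 * π) := by
      rw [h0, abs_mul, abs_of_pos h2π]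
    rw [h3]
    linarith
  have hcos : Real.cos c' = Real.cos c := by
    rw [hc', show c - k * (2 * π) = c + (-k : ℤ) * (2 * π) by push_cast; ring,
      Real.cos_add_int_mul_two_pi]
  have hcospos : 0 < Real.cos c' := by
    rw [hcos, hc, ← Real.cos_neg, show -(t - φ) = φ - t by ring]
    exact hpos
  have hlt : |c'| < π / 2 := by
    by_contra hcon
    push_neg at hcon
    have : Real.cos |c'| ≤ 0 :=
      Real.cos_nonpos_of_pi_div_two_le_of_le hcon (by linarith [Real.pi_pos])
    rw [Real.cos_abs] at this
    linarith
  rw [abs_lt] at hlt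
  refine ⟨φ + c', by linarith, by linarith, ?_⟩
  rw [show φ + c' = t + (-k : ℤ) * (2 * π) by rw [hc', hc]; push_cast; ring,
    unitVec_add_int_mul]

lemma polygon_setup (V : Finset Plane) (hV : IsConvexPolygon V) (v : Plane) (hv : v ∈ V) :
    ∃ β γ : ℝ, 0 < γ - β ∧ γ - β < π ∧
      (∀ w ∈ V, w ≠ v → ∃ r : ℝ, 0 < r ∧ ∃ ψ, β ≤ ψ ∧ ψ ≤ γ ∧ w = v + r • unitVec ψ) ∧
      (∃ r : ℝ, 0 < r ∧ v + r • unitVec β ∈ V) ∧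
      (∃ r : ℝ, 0 < r ∧ v + r • unitVec γ ∈ V) := by
  classical
  set W := V.erase v with hWdef
  have hWcard : 2 ≤ W.card := by
    have h3 := hV.1
    rw [hWdef, Finset.card_erase_of_mem hv]
    omega
  have hWne : W.Nonempty := Finset.card_pos.mp (by omega)
  have hWv : ∀ w ∈ W, w ≠ v := fun w hw => Finset.ne_of_mem_erase hw
  have hWV : ∀ w ∈ W, w ∈ V := fun w hw => Finset.mem_of_mem_erase hw
  have hvnot : v ∉ convexHull ℝ (W : Set Plane) := hV.2 v hv
  obtain ⟨f, u, hfv, hfw⟩ := geometric_hahn_banach_point_closed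
    (convex_convexHull ℝ (W : Set Plane)) ((W.finite_toSet).isClosed_convexHull (𝕜 := ℝ)) hvnot
  set z := (InnerProductSpace.toDual ℝ Plane).symm f with hzdef
  have hz : ∀ y : Plane, (inner ℝ z y : ℝ) = f y := fun y => InnerProductSpace.toDual_symm_apply
  have hzw : ∀ w ∈ W, 0 < (inner ℝ z (w - v) : ℝ) := by
    intro w hw
    rw [inner_sub_right, hz, hz]
    have : u < f w := hfw w (subset_convexHull ℝ (W : Set Plane) hw)
    linarith
  have hzne : z ≠ 0 := by
    obtain ⟨w₀, hw₀⟩ := hWne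
    intro hzero
    have := hzw w₀ hw₀
    rw [hzero, inner_zero_left] at this
    linarith
  have hznorm : 0 < ‖z‖ := norm_pos_iff.mpr hzne
  set n : Plane := ‖z‖⁻¹ • z with hndef
  have hn : ‖n‖ = 1 := by
    rw [hndef, norm_smul, norm_inv, norm_norm, inv_mul_cancel₀ (ne_of_gt hznorm)]
  have hnw : ∀ w ∈ W, 0 < (inner ℝ n (w - v) : ℝ) := by
    intro w hw
    rw [hndef, real_inner_smul_left]
    exact mul_pos (inv_pos.mpr hznorm) (hzw w hw)
  obtain ⟨φ, hφ⟩ := exists_arg hn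
  have H : ∀ w : Plane, ∃ ψ : ℝ, w ∈ W →
      (φ - π/2 < ψ ∧ ψ < φ + π/2 ∧ ∃ r : ℝ, 0 < r ∧ w = v + r • unitVec ψ) := by
    intro w
    by_cases hw : w ∈ W
    · obtain ⟨r, hr, d, hd, hwd⟩ := exists_dir (hWv w hw)
      have hinner : 0 < (inner ℝ (unitVec φ) d : ℝ) := by
        have h1 := hnw w hw
        rw [hφ] at h1
        rw [show w - v = r • d by rw [hwd]; abel] at h1
        rw [real_inner_smul_right] at h1
        nlinarith
      obtain ⟨ψ, hψ1, hψ2, hψ3⟩ := exists_arg_near φ hd hinner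
      exact ⟨ψ, fun _ => ⟨hψ1, hψ2, r, hr, by rw [hwd, hψ3]⟩⟩
    · exact ⟨0, fun h => absurd h hw⟩
  set Ψ : Plane → ℝ := fun w => Classical.choose (H w) with hΨdef
  have hΨ : ∀ w ∈ W, (φ - π/2 < Ψ w ∧ Ψ w < φ + π/2 ∧
      ∃ r : ℝ, 0 < r ∧ w = v + r • unitVec (Ψ w)) := fun w hw => Classical.choose_spec (H w) hw
  set β := W.inf' hWne Ψ with hβdef
  set γ := W.sup' hWne Ψ with hγdef
  obtain ⟨wβ, hwβW, hβeq⟩ := Finset.exists_mem_eq_inf' hWne Ψ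
  obtain ⟨wγ, hwγW, hγeq⟩ := Finset.exists_mem_eq_sup' hWne Ψ
  have hβeq' : β = Ψ wβ := hβeq
  have hγeq' : γ = Ψ wγ := hγeq
  have hβlo : φ - π/2 < β := by rw [hβeq']; exact (hΨ wβ hwβW).1
  have hγhi : γ < φ + π/2 := by rw [hγeq']; exact (hΨ wγ hwγW).2.1
  have hβγπ : γ - β < π := by linarith
  have hβle : ∀ w ∈ W, β ≤ Ψ w := fun w hw => Finset.inf'_le Ψ hw
  have hγge : ∀ w ∈ W, Ψ w ≤ γ := fun w hw => Finset.le_sup' Ψ hw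
  have hβγ0 : 0 < γ - β := by
    by_contra hcon
    push_neg at hcon
    have hall : ∀ w ∈ W, Ψ w = β := by
      intro w hw
      have := hβle w hw
      have := hγge w hw
      linarith
    obtain ⟨w₁, hw₁, w₂, hw₂, hne⟩ := Finset.one_lt_card.mp (by omega : 1 < W.card)
    obtain ⟨r₁, hr₁, hw₁eq⟩ := (hΨ w₁ hw₁).2.2
    obtain ⟨r₂, hr₂, hw₂eq⟩ := (hΨ w₂ hw₂).2.2
    rw [hall w₁ hw₁] at hw₁eq
    rw [hall w₂ hw₂] at hw₂eq
    have key : ∀ a b : Plane, a ∈ W → b ∈ W → ∀ ra rb : ℝ, 0 < ra → ra < rb →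
        a = v + ra • unitVec β → b = v + rb • unitVec β → False := by
      intro a b haW hbW ra rb hra hrab haeq hbeq
      have habne : a ≠ b := by
        intro h
        rw [haeq, hbeq] at h
        have h2 : ra • unitVec β = rb • unitVec β := add_left_cancel h
        have h3 := congrArg norm h2
        rw [norm_smul, norm_smul, norm_unitVec, Real.norm_eq_abs, Real.norm_eq_abs,
          abs_of_pos hra, abs_of_pos (lt_trans hra hrab)] at h3
        simp at h3
        linarith
      have havne : a ≠ v := hWv a haW
      have hseg : a ∈ segment ℝ v b := by
        refine ⟨1 - ra / rb, ra / rb, by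
          have : ra / rb < 1 := (div_lt_one (by linarith)).mpr hrab
          linarith, le_of_lt (div_pos hra (lt_trans hra hrab)), by ring, ?_⟩
        rw [haeq, hbeq]
        have : ra / rb * rb = ra := div_mul_cancel₀ ra (by linarith : rb ≠ 0)
        rw [smul_add, smul_smul, this]
        module
      have hsub : segment ℝ v b ⊆ convexHull ℝ ((V.erase a : Finset Plane) : Set Plane) := by
        apply (convex_convexHull ℝ _).segment_subset
        · exact subset_convexHull ℝ _ (by
            simp only [Finset.coe_erase, Set.mem_diff, Set.mem_singleton_iff]
            exact ⟨hv, havne.symm⟩)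
        · exact subset_convexHull ℝ _ (by
            simp only [Finset.coe_erase, Set.mem_diff, Set.mem_singleton_iff]
            exact ⟨hWV b hbW, habne.symm⟩)
      exact hV.2 a (hWV a haW) (hsub hseg)
    rcases lt_trichotomy r₁ r₂ with h | h | h
    · exact key w₁ w₂ hw₁ hw₂ r₁ r₂ hr₁ h hw₁eq hw₂eq
    · apply hne
      rw [hw₁eq, hw₂eq, h]
    · exact key w₂ w₁ hw₂ hw₁ r₂ r₁ hr₂ h hw₂eq hw₁eq
  refine ⟨β, γ, hβγ0, hβγπ, ?_, ?_, ?_⟩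
  · intro w hwV hwv
    have hwW : w ∈ W := Finset.mem_erase.mpr ⟨hwv, hwV⟩
    obtain ⟨r, hr, hweq⟩ := (hΨ w hwW).2.2
    exact ⟨r, hr, Ψ w, hβle w hwW, hγge w hwW, hweq⟩
  · obtain ⟨r, hr, hweq⟩ := (hΨ wβ hwβW).2.2
    rw [← hβeq'] at hweq
    exact ⟨r, hr, by rw [← hweq]; exact hWV wβ hwβW⟩
  · obtain ⟨r, hr, hweq⟩ := (hΨ wγ hwγW).2.2
    rw [← hγeq'] at hweq
    exact ⟨r, hr, by rw [← hweq]; exact hWV wγ hwγW⟩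

lemma inner_perp1 (β ψ : ℝ) : (inner ℝ (unitVec (β + π/2)) (unitVec ψ) : ℝ) = Real.sin (ψ - β) := by
  rw [inner_unitVec, show β + π/2 - ψ = π/2 - (ψ - β) by ring, Real.cos_pi_div_two_sub]

lemma inner_perp2 (γ ψ : ℝ) : (inner ℝ (unitVec (γ - π/2)) (unitVec ψ) : ℝ) = Real.sin (γ - ψ) := by
  rw [inner_unitVec, show γ - π/2 - ψ = -(π/2 - (γ - ψ)) by ring, Real.cos_neg,
    Real.cos_pi_div_two_sub]

lemma inner_combo (n : Plane) {a b v : Plane} {p q : ℝ} (hpq : p + q = 1) :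
    (inner ℝ n (p • a + q • b - v) : ℝ) = p * inner ℝ n (a - v) + q * inner ℝ n (b - v) := by
  have h : p • a + q • b - v = p • (a - v) + q • (b - v) := by
    have hv : p • v + q • v = v := by rw [← add_smul, hpq, one_smul]
    have h2 : p • a + q • b - (p • v + q • v) = p • (a - v) + q • (b - v) := by
      rw [smul_sub, smul_sub]
      abel
    rw [hv] at h2
    exact h2
  rw [h, inner_add_right, real_inner_smul_right, real_inner_smul_right]

lemma hull_cone (V : Finset Plane) (v : Plane) (β γ : ℝ) (hβγ0 : 0 < γ - β) (hβγπ : γ - β < π)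
    (hvert : ∀ w ∈ V, w = v ∨ ∃ r : ℝ, 0 < r ∧ ∃ ψ, β ≤ ψ ∧ ψ ≤ γ ∧ w = v + r • unitVec ψ) :
    ∀ a ∈ convexHull ℝ (V : Set Plane), a ≠ v →
      ∃ r : ℝ, 0 < r ∧ ∃ ψ, β ≤ ψ ∧ ψ ≤ γ ∧ a = v + r • unitVec ψ := by
  set n₁ := unitVec (β + π/2) with hn₁
  set n₂ := unitVec (γ - π/2) with hn₂
  set S : Set Plane := {a | 0 ≤ (inner ℝ n₁ (a - v) : ℝ) ∧ 0 ≤ (inner ℝ n₂ (a - v) : ℝ)} with hS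
  have hSconv : Convex ℝ S := by
    intro a ha b hb p q hp hq hpq
    constructor
    · rw [Set.mem_setOf_eq] at ha hb
      show (0:ℝ) ≤ inner ℝ n₁ (p • a + q • b - v)
      rw [inner_combo n₁ hpq]
      have h1 := ha.1
      have h2 := hb.1
      positivity
    · rw [Set.mem_setOf_eq] at ha hb
      show (0:ℝ) ≤ inner ℝ n₂ (p • a + q • b - v)
      rw [inner_combo n₂ hpq]
      have h1 := ha.2
      have h2 := hb.2
      positivity
  have hVS : (V : Set Plane) ⊆ S := by
    intro w hw
    rcases hvert w hw with rfl | ⟨r, hr, ψ, hψβ, hψγ, hweq⟩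
    · constructor <;> · show (0:ℝ) ≤ inner ℝ _ (w - w); rw [sub_self, inner_zero_right]
    · have hwv : w - v = r • unitVec ψ := by rw [hweq]; abel
      constructor
      · show (0:ℝ) ≤ inner ℝ n₁ (w - v)
        rw [hwv, real_inner_smul_right, hn₁, inner_perp1]
        have : 0 ≤ Real.sin (ψ - β) :=
          Real.sin_nonneg_of_nonneg_of_le_pi (by linarith) (by linarith)
        positivity
      · show (0:ℝ) ≤ inner ℝ n₂ (w - v)
        rw [hwv, real_inner_smul_right, hn₂, inner_perp2]
        have : 0 ≤ Real.sin (γ - ψ) :=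
          Real.sin_nonneg_of_nonneg_of_le_pi (by linarith) (by linarith)
        positivity
  have hhull : convexHull ℝ (V : Set Plane) ⊆ S := convexHull_min hVS hSconv
  intro a ha hav
  obtain ⟨r, hr, d, hd, haeq⟩ := exists_dir hav
  obtain ⟨ψ₀, rfl⟩ := exists_arg hd
  have hav' : a - v = r • unitVec ψ₀ := by rw [haeq]; abel
  have haS := hhull ha
  obtain ⟨h1, h2⟩ := haS
  rw [hav', real_inner_smul_right, hn₁, inner_perp1] at h1
  rw [hav', real_inner_smul_right, hn₂, inner_perp2] at h2
  have hs1 : 0 ≤ Real.sin (ψ₀ - β) := nonneg_of_mul_nonneg_right h1 hr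
  have hs2 : 0 ≤ Real.sin (γ - ψ₀) := nonneg_of_mul_nonneg_right h2 hr
  obtain ⟨ψ, hψβ, hψγ, k, hψk⟩ := arg_window hβγ0 hβγπ hs1 hs2
  refine ⟨r, hr, ψ, hψβ, hψγ, ?_⟩
  rw [haeq, hψk, unitVec_add_int_mul]

lemma forward_core {ω β γ : ℝ} (hω0 : 0 < ω) (hωπ : ω < π) (hβγ0 : 0 < γ - β)
    (hβγω : γ - β < ω) (v : Plane) {rβ rγ : ℝ} (hrβ : 0 < rβ) (hrγ : 0 < rγ) (s : ℝ)
    (h1 : v + rβ • unitVec β ∈ wedgeSet v (unitVec s) (unitVec (s + ω)))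
    (h2 : v + rγ • unitVec γ ∈ wedgeSet v (unitVec s) (unitVec (s + ω))) :
    ∃ θ, γ - ω/2 ≤ θ ∧ θ ≤ β + ω/2 ∧ unitVec (s + ω/2) = unitVec θ := by
  obtain ⟨p₁, q₁, hp₁, hq₁, he₁⟩ := h1
  obtain ⟨p₂, q₂, hp₂, hq₂, he₂⟩ := h2
  obtain ⟨hs₁, hs₂⟩ := arg_constraints_of_mem_wedge hω0 hωπ v s β hrβ hp₁ hq₁ he₁
  obtain ⟨hs₃, hs₄⟩ := arg_constraints_of_mem_wedge hω0 hωπ v s γ hrγ hp₂ hq₂ he₂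
  rw [show ω - (β - s) = s + ω - β by ring] at hs₂
  rw [show ω - (γ - s) = s + ω - γ by ring] at hs₄
  obtain ⟨ψβ, hψβ1, hψβ2, kβ, hkβ⟩ :=
    arg_window (β := s) (γ := s + ω) (by linarith) (by linarith) hs₁ hs₂
  obtain ⟨ψγ, hψγ1, hψγ2, kγ, hkγ⟩ :=
    arg_window (β := s) (γ := s + ω) (by linarith) (by linarith) hs₃ hs₄
  have hπ : 0 < π := Real.pi_pos
  have hkeq : kβ = kγ := by
    have hb1 : -ω ≤ ψγ - ψβ := by linarith
    have hb2 : ψγ - ψβ ≤ ω := by linarith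
    have hval : ψγ - ψβ = (γ - β) + ((kγ - kβ : ℤ) : ℝ) * (2 * π) := by
      rw [hkβ, hkγ]; push_cast; ring
    have habs : |((kγ - kβ : ℤ) : ℝ)| < 1 := by
      have h2π : (0:ℝ) < 2 * π := by positivity
      rw [abs_lt]
      constructor
      · by_contra hc
        push_neg at hc
        have : ((kγ - kβ : ℤ) : ℝ) * (2 * π) ≤ -1 * (2 * π) :=
          mul_le_mul_of_nonneg_right hc (le_of_lt h2π)
        nlinarith
      · by_contra hc
        push_neg at hc
        have h1 : (1:ℝ) ≤ ((kγ - kβ : ℤ) : ℝ) := hc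
        have : 1 * (2 * π) ≤ ((kγ - kβ : ℤ) : ℝ) * (2 * π) :=
          mul_le_mul_of_nonneg_right h1 (le_of_lt h2π)
        nlinarith
    have h' : |kγ - kβ| < 1 := by
      have : ((|kγ - kβ| : ℤ) : ℝ) < 1 := by rw [Int.cast_abs]; exact habs
      exact_mod_cast this
    rw [abs_lt] at h'
    omega
  subst hkeq
  refine ⟨s + ω/2 - kβ * (2 * π), ?_, ?_, ?_⟩
  · have := hψγ2
    rw [hkγ] at this
    linarith
  · have := hψβ1
    rw [hkβ] at this
    linarith
  · rw [show s + ω/2 - kβ * (2*π) = (s + ω/2) + (-kβ : ℤ) * (2 * π) by push_cast; ring,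
      unitVec_add_int_mul]

lemma wedgeSet_swap (x d₁ d₂ : Plane) : wedgeSet x d₁ d₂ = wedgeSet x d₂ d₁ := by
  ext y
  constructor <;> rintro ⟨s, t, hs, ht, rfl⟩ <;> exact ⟨t, s, ht, hs, by abel⟩

lemma angle_points {v a b : Plane} {ra rb ψa ψb : ℝ} (hra : 0 < ra) (hrb : 0 < rb)
    (ha : a = v + ra • unitVec ψa) (hb : b = v + rb • unitVec ψb) (h : |ψa - ψb| ≤ π) :
    EuclideanGeometry.angle a v b = |ψa - ψb| := by
  rw [EuclideanGeometry.angle, show a -ᵥ v = ra • unitVec ψa by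
      rw [ha, vsub_eq_sub]; abel,
    show b -ᵥ v = rb • unitVec ψb by rw [hb, vsub_eq_sub]; abel,
    InnerProductGeometry.angle_smul_left_of_pos _ _ hra,
    InnerProductGeometry.angle_smul_right_of_pos _ _ hrb, angle_unitVec h]

lemma vertex_ne {v : Plane} {r ψ : ℝ} (hr : 0 < r) : v + r • unitVec ψ ≠ v := by
  intro h
  have h2 : r • unitVec ψ = 0 := by
    have := h
    nth_rewrite 2 [show v = v + (0:Plane) by rw [add_zero]] at this
    exact add_left_cancel this
  have h3 := congrArg norm h2
  rw [norm_smul, norm_unitVec, norm_zero, Real.norm_eq_abs, abs_of_pos hr] at h3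
  linarith

/-- For a strictly narrow vertex `v` (interior angle `< ω`), the set of bisector directions
of minimal `ω`-wedges with apex `v` is a closed arc of directions of angular width
exactly `ω - α(v)`. -/
theorem stmt_4 (V : Finset Plane) (hV : IsConvexPolygon V) (ω : ℝ) (hω : ω ∈ Set.Ioo 0 π)
    (v : Plane) (hv : v ∈ V)
    (hnarrow : interiorAngle (convexHull ℝ (V : Set Plane)) v < ω) :
    ∃ θ₀ : ℝ, wedgeDirs (convexHull ℝ (V : Set Plane)) ω v =
      {p | ∃ θ ∈ Set.Icc θ₀ (θ₀ + (ω - interiorAngle (convexHull ℝ (V : Set Plane)) v)),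
        p = unitVec θ} := by
  obtain ⟨hω0, hωπ⟩ := hω
  obtain ⟨β, γ, hβγ0, hβγπ, hvert, ⟨rβ, hrβ, hwβV⟩, ⟨rγ, hrγ, hwγV⟩⟩ := polygon_setup V hV v hv
  set P := convexHull ℝ (V : Set Plane) with hPdef
  have hvP : v ∈ P := subset_convexHull ℝ _ hv
  have hvert' : ∀ w ∈ V, w = v ∨ ∃ r : ℝ, 0 < r ∧ ∃ ψ, β ≤ ψ ∧ ψ ≤ γ ∧ w = v + r • unitVec ψ := by
    intro w hw
    by_cases h : w = v
    · exact Or.inl h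
    · exact Or.inr (hvert w hw h)
  have cone := hull_cone V v β γ hβγ0 hβγπ hvert'
  -- interiorAngle = γ - β
  have hwβP : v + rβ • unitVec β ∈ P := subset_convexHull ℝ _ hwβV
  have hwγP : v + rγ • unitVec γ ∈ P := subset_convexHull ℝ _ hwγV
  have hαeq : interiorAngle P v = γ - β := by
    rw [interiorAngle]
    set Sang := {θ : ℝ | ∃ a ∈ P, ∃ b ∈ P, a ≠ v ∧ b ≠ v ∧ θ = EuclideanGeometry.angle a v b}
      with hSang
    have hub : ∀ θ ∈ Sang, θ ≤ γ - β := by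
      rintro θ ⟨a, ha, b, hb, hav, hbv, rfl⟩
      obtain ⟨ra, hra, ψa, hψa1, hψa2, haeq⟩ := cone a ha hav
      obtain ⟨rb, hrb, ψb, hψb1, hψb2, hbeq⟩ := cone b hb hbv
      have habs : |ψa - ψb| ≤ γ - β := abs_sub_le_iff.mpr ⟨by linarith, by linarith⟩
      rw [angle_points hra hrb haeq hbeq (by linarith)]
      exact habs
    have hmem : γ - β ∈ Sang := by
      refine ⟨v + rγ • unitVec γ, hwγP, v + rβ • unitVec β, hwβP, vertex_ne hrγ,
        vertex_ne hrβ, ?_⟩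
      have habs : |γ - β| = γ - β := abs_of_nonneg (by linarith)
      rw [angle_points hrγ hrβ rfl rfl (by rw [habs]; linarith), habs]
    exact le_antisymm (csSup_le ⟨γ - β, hmem⟩ hub) (le_csSup ⟨γ - β, hub⟩ hmem)
  rw [hαeq] at hnarrow ⊢
  have hcosω2 : 0 < Real.cos (ω / 2) :=
    Real.cos_pos_of_mem_Ioo ⟨by linarith [Real.pi_pos], by linarith⟩
  -- normalized sum lemma
  have hnormsum : ∀ s : ℝ, (‖unitVec s + unitVec (s + ω)‖)⁻¹ • (unitVec s + unitVec (s + ω))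
      = unitVec (s + ω / 2) := by
    intro s
    rw [unitVec_add_unitVec]
    rw [norm_smul, norm_unitVec, Real.norm_eq_abs, abs_of_pos (by linarith), mul_one, smul_smul,
      inv_mul_cancel₀ (by linarith), one_smul]
  refine ⟨γ - ω/2, ?_⟩
  ext p
  simp only [Set.mem_setOf_eq]
  constructor
  · rintro ⟨d₁, d₂, ⟨hd₁, hd₂, hang, hsub, _, _⟩, rfl⟩
    obtain ⟨s, rfl⟩ := exists_arg hd₁
    obtain ⟨t, rfl⟩ := exists_arg hd₂
    have hcos : Real.cos (s - t) = Real.cos ω := by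
      have := InnerProductGeometry.cos_angle (unitVec s) (unitVec t)
      rw [hang, inner_unitVec, norm_unitVec, norm_unitVec] at this
      rw [this]
      norm_num
    rw [Real.cos_eq_cos_iff] at hcos
    obtain ⟨k, hk | hk⟩ := hcos
    · -- ω = 2kπ + (s - t), so t + ω = s + 2kπ : d₁ = unitVec s = unitVec (t + ω)
      have hseq : unitVec s = unitVec (t + ω) := by
        rw [show t + ω = s + k * (2 * π) by rw [hk]; push_cast; ring, unitVec_add_int_mul]
      rw [hseq, wedgeSet_swap] at hsub
      obtain ⟨θ, hθ1, hθ2, hθeq⟩ := forward_core hω0 hωπ hβγ0 hnarrow v hrβ hrγ t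
        (hsub hwβP) (hsub hwγP)
      refine ⟨θ, ⟨hθ1, by linarith⟩, ?_⟩
      rw [hseq, show unitVec (t + ω) + unitVec t = unitVec t + unitVec (t + ω) by abel,
        hnormsum t, hθeq]
    · -- ω = 2kπ - (s - t), so s + ω = t + 2kπ : d₂ = unitVec t = unitVec (s + ω)
      have hteq : unitVec t = unitVec (s + ω) := by
        rw [show s + ω = t + k * (2 * π) by rw [hk]; push_cast; ring, unitVec_add_int_mul]
      rw [hteq] at hsub
      obtain ⟨θ, hθ1, hθ2, hθeq⟩ := forward_core hω0 hωπ hβγ0 hnarrow v hrβ hrγ s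
        (hsub hwβP) (hsub hwγP)
      refine ⟨θ, ⟨hθ1, by linarith⟩, ?_⟩
      rw [hteq, hnormsum s, hθeq]
  · rintro ⟨θ, ⟨hθ1, hθ2⟩, rfl⟩
    have hθ2' : θ ≤ β + ω/2 := by linarith
    set s := θ - ω/2 with hsdef
    refine ⟨unitVec s, unitVec (s + ω), ⟨norm_unitVec s, norm_unitVec (s + ω), ?_, ?_, ?_, ?_⟩, ?_⟩
    · have habs2 : |s - (s + ω)| = ω := by
        rw [show s - (s + ω) = -ω by ring, abs_neg, abs_of_pos hω0]
      rw [angle_unitVec (by rw [habs2]; linarith), habs2]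
    · intro a ha
      by_cases hav : a = v
      · exact ⟨0, 0, le_refl 0, le_refl 0, by rw [hav]; simp⟩
      · obtain ⟨r, hr, ψ, hψ1, hψ2, haeq⟩ := cone a ha hav
        have hx0 : 0 ≤ ψ - s := by rw [hsdef]; linarith
        have hxω : ψ - s ≤ ω := by rw [hsdef]; linarith
        have := mem_wedge_of_arg hω0 hωπ v s (le_of_lt hr) hx0 hxω
        rw [show s + (ψ - s) = ψ by ring] at this
        rw [haeq]
        exact this
    · exact ⟨v, hvP, 0, le_refl 0, by simp⟩
    · exact ⟨v, hvP, 0, le_refl 0, by simp⟩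
    · rw [hnormsum s, hsdef]
      norm_num

end
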